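/- Let D be a Dedekind domain, let M_1, ..., M_n be distinct maximal ideals of D, let I = M_1^{e_1} ⋯ M_n^{e_n} with e_i positive integers, and let E be a finite integral extension Dedekind domain of D such that for each i there are maximal ideals N_{i,1}, ..., N_{i,s_i} of E over M_i with M_i E_{N_{i,j}} = (N_{i,j} E_{N_{i,j}})^{e_{i,j}}. If the products e_i · e_{i,j} are all equal to a common value t (for all i, j), then I E = (Rad(I E))^t, where Rad denotes the radical. -/
import Mathlib

open Ideal in
lemma radical_prod_of_maximal {R : Type*} [CommRing R] {ι : Type*} [DecidableEq ι] (s : Finset ι)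
    (P : ι → Ideal R) (hmax : ∀ i ∈ s, (P i).IsMaximal)
    (hdist : ∀ i ∈ s, ∀ j ∈ s, P i = P j → i = j) :
    (∏ i ∈ s, P i).radical = ∏ i ∈ s, P i := by
  induction s using Finset.induction_on with
  | empty => simp [Ideal.radical_top]
  | @insert a s ha ih =>
    rw [Finset.prod_insert ha, Ideal.radical_mul,
      ih (fun i hi => hmax i (Finset.mem_insert_of_mem hi))
        (fun i hi j hj h => hdist i (Finset.mem_insert_of_mem hi) j (Finset.mem_insert_of_mem hj) h),
      ((hmax a (Finset.mem_insert_self a s)).isPrime).radical,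
      ← Ideal.mul_eq_inf_of_coprime]
    exact Ideal.sup_prod_eq_top fun i hi =>
      Ideal.IsMaximal.coprime_of_ne (hmax a (Finset.mem_insert_self a s))
        (hmax i (Finset.mem_insert_of_mem hi))
        (fun h => ha (hdist a (Finset.mem_insert_self a s) i (Finset.mem_insert_of_mem hi) h ▸ hi))

/-- Let `I = M_1^{e_1} ⋯ M_n^{e_n}` for distinct maximal ideals `M_i` of a Dedekind domain `D`,
and let `E` be a finite integral extension Dedekind domain of `D` whose maximal ideals over
`M_i` are `N_{i,1}, …, N_{i,s_i}` with ramification indices `e_{i,j}` (so that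
`M_i E = ∏_j N_{i,j}^{e_{i,j}}`).  If all products `e_i · e_{i,j}` equal a common value `t`,
then `I E = (Rad (I E))^t`. -/
theorem stmt_2 (D E : Type*) [CommRing D] [IsDomain D] [IsDedekindDomain D]
    [CommRing E] [IsDomain E] [IsDedekindDomain E]
    [Algebra D E] [Module.Finite D E] [Algebra.IsIntegral D E]
    (hinj : Function.Injective (algebraMap D E))
    (n : ℕ) (hn : 0 < n) (M : Fin n → Ideal D) (hMmax : ∀ i, (M i).IsMaximal)
    (hMdist : Function.Injective M)
    (e : Fin n → ℕ) (hepos : ∀ i, 0 < e i)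
    (I : Ideal D) (hI : I = ∏ i, M i ^ e i)
    (s : Fin n → ℕ) (N : (i : Fin n) → Fin (s i) → Ideal E)
    (hNmax : ∀ i j, (N i j).IsMaximal)
    (hNdist : ∀ i j i' j', N i j = N i' j' → i = i' ∧ HEq j j')
    (eij : (i : Fin n) → Fin (s i) → ℕ)
    (hfac : ∀ i, (M i).map (algebraMap D E) = ∏ j, N i j ^ eij i j)
    (t : ℕ) (ht : ∀ i j, e i * eij i j = t) :
    I.map (algebraMap D E) = (I.map (algebraMap D E)).radical ^ t := by
  have key : I.map (algebraMap D E) = (∏ i, ∏ j, N i j) ^ t := by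
    rw [hI, show Ideal.map (algebraMap D E) (∏ i, M i ^ e i)
        = ∏ i, Ideal.map (algebraMap D E) (M i ^ e i) from
      map_prod (Ideal.mapHom (algebraMap D E)) _ _, ← Finset.prod_pow]
    refine Finset.prod_congr rfl fun i _ => ?_
    rw [Ideal.map_pow, hfac i, ← Finset.prod_pow, ← Finset.prod_pow]
    refine Finset.prod_congr rfl fun j _ => ?_
    rw [← pow_mul, mul_comm (eij i j) (e i), ht i j]
  rw [key]
  rcases t with _ | t
  · simp
  · congr 1
    rw [Ideal.radical_pow _ (Nat.succ_ne_zero t), Finset.prod_sigma']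
    exact (radical_prod_of_maximal _ _ (fun p _ => hNmax p.1 p.2)
        (fun p _ q _ h => by
          obtain ⟨h1, h2⟩ := hNdist p.1 p.2 q.1 q.2 h
          exact Sigma.ext h1 h2)).symm
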